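/- Let (a_k)_{k≥0} be a sequence of nonnegative real numbers with a_0 ≤ 1 and a_k ≤ 1 − a_0² for all k ≥ 1. Then for every r with 0 < r < 1, one has Σ_{n=0}^∞ r^n · (Σ_{k=0}^n a_k/(n+1)^{k+1}) ≤ (1/r)·log(1/(1−r)). -/

import Mathlib

open Real Finset

lemma laplace_inner_bound (a : ℕ → ℝ) (ha : ∀ k, 0 ≤ a k) (ha0 : a 0 ≤ 1)
    (hak : ∀ k, 1 ≤ k → a k ≤ 1 - (a 0) ^ 2) (n : ℕ) :
    ∑ k ∈ Finset.range (n + 1), a k / ((n : ℝ) + 1) ^ (k + 1) ≤ 1 / ((n : ℝ) + 1) := by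
  have hp0 : 0 ≤ a 0 := ha 0
  have hn1 : (0:ℝ) < (n:ℝ) + 1 := by positivity
  rw [Finset.sum_range_succ']
  -- tail bound: each a (k+1) ≤ 1 - a 0 ^ 2
  have htail : ∑ k ∈ Finset.range n, a (k + 1) / ((n : ℝ) + 1) ^ (k + 1 + 1)
      ≤ (1 - (a 0)^2) * ∑ k ∈ Finset.range n, (1 / ((n:ℝ)+1)) ^ k / ((n:ℝ)+1)^2 := by
    rw [Finset.mul_sum]
    apply Finset.sum_le_sum
    intro k _
    have h1 : a (k+1) ≤ 1 - (a 0)^2 := hak (k+1) (Nat.le_add_left 1 k)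
    have h2 : ((n:ℝ)+1) ^ (k+1+1) = ((n:ℝ)+1)^k * ((n:ℝ)+1)^2 := by ring
    rw [h2, div_pow, one_pow, div_div, mul_one_div]
    gcongr
  have hgeom : ∑ k ∈ Finset.range n, (1 / ((n:ℝ)+1)) ^ k ≤ if n = 0 then 0 else
      if n = 1 then 1 else ((n:ℝ)+1)/n := by
    rcases Nat.eq_or_lt_of_le (Nat.zero_le n) with h0 | h0
    · simp [← h0]
    rcases Nat.eq_or_lt_of_le h0 with h1 | h1
    · simp [← h1]
    have hn2 : 2 ≤ n := h1
    simp only [if_neg (by omega : n ≠ 0), if_neg (by omega : n ≠ 1)]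
    have hx : (1 / ((n:ℝ)+1)) < 1 := by
      rw [div_lt_one hn1]
      have : (1:ℝ) ≤ (n:ℝ) := by exact_mod_cast (by omega : 1 ≤ n)
      linarith
    have hx0 : (0:ℝ) ≤ 1 / ((n:ℝ)+1) := by positivity
    calc ∑ k ∈ Finset.range n, (1 / ((n:ℝ)+1)) ^ k
        ≤ 1 / (1 - 1/((n:ℝ)+1)) := by
          rw [geom_sum_eq hx.ne, ← neg_div_neg_eq, neg_sub, neg_sub]
          have h1x : (0:ℝ) < 1 - 1/((n:ℝ)+1) := by linarith
          have hpow : (0:ℝ) ≤ (1/((n:ℝ)+1))^n := by positivity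
          exact (div_le_div_iff_of_pos_right h1x).mpr (by linarith)
      _ = ((n:ℝ)+1)/n := by
          have hnpos : (0:ℝ) < n := by exact_mod_cast (by omega : 0 < n)
          field_simp
          rw [add_sub_cancel_right, div_self hnpos.ne']
  have key : ∑ k ∈ Finset.range n, a (k + 1) / ((n : ℝ) + 1) ^ (k + 1 + 1)
      ≤ (1 - (a 0)^2) *
        ((if n = 0 then 0 else if n = 1 then 1 else ((n:ℝ)+1)/n) / ((n:ℝ)+1)^2) := by
    refine htail.trans ?_
    rw [← Finset.sum_div]
    have hnn : (0:ℝ) ≤ 1 - (a 0)^2 := by nlinarith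
    gcongr
  by_cases hn0 : n = 0
  · subst hn0; simpa using ha0
  by_cases hn1' : n = 1
  · subst hn1'
    rw [if_neg (by norm_num), if_pos rfl] at key
    simp only [Finset.sum_range_succ, Finset.sum_range_zero] at key ⊢
    norm_num at key ⊢
    nlinarith
  · have hn2 : (2:ℝ) ≤ (n:ℝ) := by exact_mod_cast (by omega : 2 ≤ n)
    rw [if_neg hn0, if_neg hn1'] at key
    have hnpos : (0:ℝ) < (n:ℝ) := by linarith
    have hb : (1 - (a 0)^2) * (((n:ℝ)+1)/(n:ℝ) / ((n:ℝ)+1)^2) ≤ (1 - a 0)/((n:ℝ)+1) := by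
      have heq : ((n:ℝ)+1)/(n:ℝ)/((n:ℝ)+1)^2 = 1/((n:ℝ)*((n:ℝ)+1)) := by
        field_simp
      rw [heq, mul_one_div, div_le_div_iff₀ (by positivity) (by positivity)]
      nlinarith [mul_nonneg (sub_nonneg.2 ha0) (by linarith : (0:ℝ) ≤ (n:ℝ) - 1 - a 0)]
    calc ∑ k ∈ Finset.range n, a (k + 1) / ((n : ℝ) + 1) ^ (k + 1 + 1)
          + a 0 / ((n:ℝ)+1)^(0+1)
        ≤ (1 - a 0)/((n:ℝ)+1) + a 0/((n:ℝ)+1) := by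
          rw [pow_one]
          exact add_le_add (key.trans hb) le_rfl
      _ = 1/((n:ℝ)+1) := by rw [← add_div]; ring_nf

/-- Bohr-type inequality for the discrete Laplace transform
(real coefficient form of Theorem 2.4). -/
theorem laplace_bohr (a : ℕ → ℝ) (ha : ∀ k, 0 ≤ a k) (ha0 : a 0 ≤ 1)
    (hak : ∀ k, 1 ≤ k → a k ≤ 1 - (a 0) ^ 2)
    (r : ℝ) (hr : r ∈ Set.Ioo (0 : ℝ) 1) :
    ∑' n : ℕ, r ^ n * ∑ k ∈ Finset.range (n + 1), a k / ((n : ℝ) + 1) ^ (k + 1)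
      ≤ (1 / r) * Real.log (1 / (1 - r)) := by
  obtain ⟨hr0, hr1⟩ := hr
  have hS : ∀ n : ℕ, 0 ≤ ∑ k ∈ Finset.range (n+1), a k / ((n:ℝ)+1)^(k+1) :=
    fun n => Finset.sum_nonneg (fun k _ => div_nonneg (ha k) (by positivity))
  have hbound : ∀ n : ℕ, r ^ n * ∑ k ∈ Finset.range (n+1), a k / ((n:ℝ)+1)^(k+1)
      ≤ r ^ n * (1/((n:ℝ)+1)) :=
    fun n => mul_le_mul_of_nonneg_left (laplace_inner_bound a ha ha0 hak n)
      (pow_nonneg hr0.le n)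
  have hsum2 : HasSum (fun n : ℕ => r ^ n * (1/((n:ℝ)+1))) (-Real.log (1-r)/r) := by
    have h := (hasSum_pow_div_log_of_abs_lt_one
      (x := r) (by rw [abs_of_pos hr0]; exact hr1)).div_const r
    have hfe : (fun n : ℕ => r ^ n * (1/((n:ℝ)+1)))
        = fun n : ℕ => r ^ (n+1)/((n:ℝ)+1)/r := by
      funext n
      rw [mul_one_div, pow_succ, div_div, mul_comm ((n:ℝ)+1) r, ← div_div,
        mul_div_assoc, div_self hr0.ne', mul_one]
    rw [hfe]
    exact h
  have hsummable1 : Summable (fun n : ℕ =>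
      r ^ n * ∑ k ∈ Finset.range (n+1), a k / ((n:ℝ)+1)^(k+1)) :=
    Summable.of_nonneg_of_le (fun n => mul_nonneg (pow_nonneg hr0.le n) (hS n))
      hbound hsum2.summable
  have hle := Summable.tsum_le_tsum hbound hsummable1 hsum2.summable
  rw [hsum2.tsum_eq] at hle
  refine hle.trans_eq ?_
  rw [Real.log_div one_ne_zero (by linarith), Real.log_one]
  ring
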